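/- Let H be a complex Hilbert space, V : H → H a unitary operator (surjective linear isometry), and let P and Q be orthogonal projections on H. Let p be a real number with 0 < p < 1 and let w₀ ∈ H be a unit vector such that Q w₀ = w₀ and Q (V† (P (V w₀))) = p • w₀. Then there exist unit vectors w₁, s₀, s₁ ∈ H such that Q w₁ = 0, P s₀ = 0, P s₁ = s₁, V w₀ = √(1−p) • s₀ + √p • s₁, and V w₁ = √p • s₀ − √(1−p) • s₁. -/

import Mathlib

open scoped InnerProductSpace

theorem stmt_0 {H : Type*} [NormedAddCommGroup H] [InnerProductSpace ℂ H] [CompleteSpace H]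
    (V : H ≃ₗᵢ[ℂ] H) (P Q : H →L[ℂ] H)
    (hP : IsSelfAdjoint P) (hP2 : IsIdempotentElem P)
    (hQ : IsSelfAdjoint Q) (hQ2 : IsIdempotentElem Q)
    (p : ℝ) (hp0 : 0 < p) (hp1 : p < 1)
    (w₀ : H) (hw₀ : ‖w₀‖ = 1) (hQw₀ : Q w₀ = w₀)
    (heig : Q (V.symm (P (V w₀))) = (p : ℂ) • w₀) :
    ∃ w₁ s₀ s₁ : H, ‖w₁‖ = 1 ∧ ‖s₀‖ = 1 ∧ ‖s₁‖ = 1 ∧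
      Q w₁ = 0 ∧ P s₀ = 0 ∧ P s₁ = s₁ ∧
      V w₀ = (Real.sqrt (1 - p) : ℂ) • s₀ + (Real.sqrt p : ℂ) • s₁ ∧
      V w₁ = (Real.sqrt p : ℂ) • s₀ - (Real.sqrt (1 - p) : ℂ) • s₁ := by
  have hPsym : ∀ x y : H, ⟪P x, y⟫_ℂ = ⟪x, P y⟫_ℂ :=
    (ContinuousLinearMap.isSelfAdjoint_iff_isSymmetric.mp hP)
  have hQsym : ∀ x y : H, ⟪Q x, y⟫_ℂ = ⟪x, Q y⟫_ℂ :=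
    (ContinuousLinearMap.isSelfAdjoint_iff_isSymmetric.mp hQ)
  have hPP : ∀ x : H, P (P x) = P x := by
    intro x
    have := congrFun (congrArg (fun T : H →L[ℂ] H => (T : H → H)) hP2.eq) x
    simpa [ContinuousLinearMap.mul_apply] using this
  have hQQ : ∀ x : H, Q (Q x) = Q x := by
    intro x
    have := congrFun (congrArg (fun T : H →L[ℂ] H => (T : H → H)) hQ2.eq) x
    simpa [ContinuousLinearMap.mul_apply] using this
  set u : H := V w₀ with hu
  set a : H := P u with ha
  set b : H := u - a with hb
  set z : H := V.symm a with hz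
  set sp : ℝ := Real.sqrt p with hsp
  set sq : ℝ := Real.sqrt (1 - p) with hsq
  have hp1' : (0:ℝ) < 1 - p := by linarith
  have hsp0 : 0 < sp := Real.sqrt_pos.mpr hp0
  have hsq0 : 0 < sq := Real.sqrt_pos.mpr hp1'
  have hsp2 : sp ^ 2 = p := Real.sq_sqrt hp0.le
  have hsq2 : sq ^ 2 = 1 - p := Real.sq_sqrt hp1'.le
  have hspc : (sp : ℂ) ≠ 0 := by exact_mod_cast hsp0.ne'
  have hsqc : (sq : ℂ) ≠ 0 := by exact_mod_cast hsq0.ne'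
  have hp2c : ((sp : ℝ) : ℂ) ^ 2 = (p : ℂ) := by exact_mod_cast hsp2
  have hq2c : ((sq : ℝ) : ℂ) ^ 2 = ((1 - p : ℝ) : ℂ) := by exact_mod_cast hsq2
  have h1c : ((sp : ℝ) : ℂ) ^ 2 + ((sq : ℝ) : ℂ) ^ 2 = 1 := by
    rw [hp2c, hq2c]; push_cast; ring
  have hQz : Q z = (p : ℂ) • w₀ := heig
  -- basic projection facts
  have hPa : P a = a := hPP u
  have hPb : P b = 0 := by rw [hb, map_sub, ha, hPP, sub_self]
  set d : H := Q z - z with hd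
  have hQd : Q d = 0 := by rw [hd, map_sub, hQQ, sub_self]
  -- inner product computations
  have hw0w0 : ⟪w₀, w₀⟫_ℂ = 1 := by
    rw [inner_self_eq_norm_sq_to_K, hw₀]; norm_num
  have hwz : ⟪w₀, z⟫_ℂ = (p : ℂ) := by
    calc ⟪w₀, z⟫_ℂ = ⟪Q w₀, z⟫_ℂ := by rw [hQw₀]
      _ = ⟪w₀, Q z⟫_ℂ := hQsym _ _
      _ = ⟪w₀, (p : ℂ) • w₀⟫_ℂ := by rw [hQz]
      _ = (p : ℂ) * ⟪w₀, w₀⟫_ℂ := inner_smul_right _ _ _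
      _ = (p : ℂ) := by rw [hw0w0]; ring
  have hua : ⟪u, a⟫_ℂ = (p : ℂ) := by
    calc ⟪u, a⟫_ℂ = ⟪V w₀, V (V.symm a)⟫_ℂ := by rw [V.apply_symm_apply, hu]
      _ = ⟪w₀, V.symm a⟫_ℂ := V.inner_map_map _ _
      _ = (p : ℂ) := hwz
  have haa : ⟪a, a⟫_ℂ = (p : ℂ) := by
    calc ⟪a, a⟫_ℂ = ⟪P u, P u⟫_ℂ := by rw [← ha]
      _ = ⟪u, P (P u)⟫_ℂ := hPsym _ _
      _ = ⟪u, a⟫_ℂ := by rw [hPP, ← ha]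
      _ = (p : ℂ) := hua
  have hau : ⟪a, u⟫_ℂ = (p : ℂ) := by
    rw [← inner_conj_symm, hua]
    simp
  have huu : ⟪u, u⟫_ℂ = 1 := by
    rw [inner_self_eq_norm_sq_to_K]
    rw [hu, V.norm_map, hw₀]; norm_num
  -- norms
  have norm_of_inner : ∀ (x : H) (r : ℝ), 0 ≤ r → ⟪x, x⟫_ℂ = (r : ℂ) → ‖x‖ = Real.sqrt r := by
    intro x r hr hxr
    have h1 : ((‖x‖ : ℂ)) ^ 2 = (r : ℂ) := by
      rw [← hxr, inner_self_eq_norm_sq_to_K]; norm_cast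
    have h2 : ‖x‖ ^ 2 = r := by exact_mod_cast h1
    rw [← h2, Real.sqrt_sq (norm_nonneg x)]
  have hna : ‖a‖ = sp := norm_of_inner a p hp0.le haa
  have hbb : ⟪b, b⟫_ℂ = ((1 - p : ℝ) : ℂ) := by
    rw [hb, inner_sub_sub_self, huu, hua, hau, haa]
    push_cast; ring
  have hnb : ‖b‖ = sq := norm_of_inner b (1 - p) hp1'.le hbb
  -- z computations
  have hzz : ⟪z, z⟫_ℂ = (p : ℂ) := by
    rw [hz, V.symm.inner_map_map, haa]
  have hzw : ⟪z, w₀⟫_ℂ = (p : ℂ) := by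
    rw [← inner_conj_symm, hwz]; simp
  have hzQz : ⟪z, Q z⟫_ℂ = ((p^2 : ℝ) : ℂ) := by
    rw [hQz, inner_smul_right, hzw]; push_cast; ring
  have hQzz : ⟪Q z, z⟫_ℂ = ((p^2 : ℝ) : ℂ) := by
    rw [← inner_conj_symm, hzQz]; simp
  have hQzQz : ⟪Q z, Q z⟫_ℂ = ((p^2 : ℝ) : ℂ) := by
    rw [hQz, inner_smul_right, inner_smul_left, hw0w0]
    push_cast; simp; ring
  have hdd : ⟪d, d⟫_ℂ = ((p * (1 - p) : ℝ) : ℂ) := by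
    rw [hd, inner_sub_sub_self, hQzQz, hzQz, hQzz, hzz]
    push_cast; ring
  have hnd : ‖d‖ = Real.sqrt (p * (1 - p)) :=
    norm_of_inner d _ (by positivity) hdd
  have hndd : ‖d‖ = sp * sq := by
    rw [hnd, Real.sqrt_mul hp0.le]
  -- definitions
  refine ⟨((sp * sq : ℝ) : ℂ)⁻¹ • d, ((sq : ℝ) : ℂ)⁻¹ • b, ((sp : ℝ) : ℂ)⁻¹ • a,
    ?_, ?_, ?_, ?_, ?_, ?_, ?_, ?_⟩
  · rw [norm_smul, hndd, norm_inv, Complex.norm_real, Real.norm_eq_abs,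
      abs_of_pos (mul_pos hsp0 hsq0)]
    field_simp
  · rw [norm_smul, hnb, norm_inv, Complex.norm_real, Real.norm_eq_abs, abs_of_pos hsq0]
    field_simp
  · rw [norm_smul, hna, norm_inv, Complex.norm_real, Real.norm_eq_abs, abs_of_pos hsp0]
    field_simp
  · rw [map_smul, hQd, smul_zero]
  · rw [map_smul, hPb, smul_zero]
  · rw [map_smul, hPa]
  · -- V w₀ = sq • s₀ + sp • s₁
    rw [smul_inv_smul₀ hsqc, smul_inv_smul₀ hspc, hb]
    abel
  · -- V w₁
    have hVd : V d = (p : ℂ) • u - a := by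
      rw [hd, map_sub, hQz, map_smul, ← hu, hz, V.apply_symm_apply]
    rw [map_smul, hVd, hb]
    match_scalars
    · field_simp
      linear_combination -hp2c
    · field_simp
      linear_combination h1c
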